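/- Let V be a real Hilbert space compactly embedded in a Hilbert space H (identified with its dual, so V ↪ H ↪ V'), A : V → V' linear, bounded, coercive, and weakly sequentially continuous, and j : V → ℝ convex and continuous. Suppose fₙ ⇀ f weakly in H and uₙ ⇀ u weakly in V, where each uₙ solves the variational inequality ⟨Auₙ, v−uₙ⟩ + j(v) − j(uₙ) ≥ ⟨fₙ, v−uₙ⟩ for all v ∈ V. Then u solves the variational inequality with right-hand side f. -/

import Mathlib

open Filter Topology

lemma bdd_of_weak {E : Type*} [NormedAddCommGroup E] [InnerProductSpace ℝ E] [CompleteSpace E]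
    (x : ℕ → E) (x₀ : E)
    (h : ∀ w : E, Tendsto (fun n => (inner ℝ (x n) w : ℝ)) atTop (𝓝 (inner ℝ x₀ w : ℝ))) :
    ∃ C : ℝ, ∀ n, ‖x n‖ ≤ C := by
  have hbs : ∀ w : E, ∃ C : ℝ, ∀ n, ‖(innerSL ℝ (x n)) w‖ ≤ C := by
    intro w
    obtain ⟨C, hC⟩ := (h w).norm.bddAbove_range
    exact ⟨C, fun n => hC ⟨n, rfl⟩⟩
  obtain ⟨C, hC⟩ := banach_steinhaus hbs
  exact ⟨C, fun n => by simpa [innerSL_apply_norm] using hC n⟩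

lemma subgrad {E : Type*} [NormedAddCommGroup E] [NormedSpace ℝ E]
    (j : E → ℝ) (hjconv : ConvexOn ℝ Set.univ j) (hjcont : Continuous j) (u : E) :
    ∃ ψ : E →L[ℝ] ℝ, ∀ w, j u + ψ (w - u) ≤ j w := by
  set s : Set (E × ℝ) := {p | j p.1 < p.2} with hs
  have hopen : IsOpen s := isOpen_lt (hjcont.comp continuous_fst) continuous_snd
  have hconv : Convex ℝ s := by
    rintro ⟨p1, p2⟩ hp ⟨q1, q2⟩ hq a b ha hb hab
    simp only [hs, Set.mem_setOf_eq] at hp hq ⊢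
    calc j (a • p1 + b • q1) ≤ a * j p1 + b * j q1 :=
          hjconv.2 (Set.mem_univ _) (Set.mem_univ _) ha hb hab
      _ < a * p2 + b * q2 := by
          rcases ha.lt_or_eq with ha' | ha'
          · rcases hb.lt_or_eq with hb' | hb'
            · exact add_lt_add (by nlinarith) (by nlinarith)
            · rw [← hb'] at hab ⊢; simp at hab; nlinarith
          · rw [← ha'] at hab ⊢; simp at hab; nlinarith
  have hx : (u, j u) ∉ s := by simp [hs]
  obtain ⟨F, hF⟩ := geometric_hahn_banach_open_point hconv hopen hx
  set α : ℝ := F (0, 1) with hα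
  have hdecomp : ∀ (w : E) (t : ℝ), F (w, t) = F (w, 0) + t * α := by
    intro w t
    have : (w, t) = (w, (0:ℝ)) + t • ((0:E), (1:ℝ)) := by simp [Prod.ext_iff]
    rw [this, map_add, map_smul]
    simp [hα]
  have hαneg : α < 0 := by
    have h1 := hF (u, j u + 1) (by simp [hs])
    rw [hdecomp u (j u + 1), hdecomp u (j u)] at h1
    nlinarith
  have key : ∀ w, F (w, 0) + j w * α ≤ F (u, 0) + j u * α := by
    intro w
    have : ∀ ε > 0, F (w, 0) + j w * α ≤ F (u, 0) + j u * α + ε := by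
      intro ε hε
      have h1 := hF (w, j w + ε / (-α))
        (by simp only [hs, Set.mem_setOf_eq]
            exact lt_add_of_pos_right _ (div_pos hε (by linarith)))
      rw [hdecomp w _, hdecomp u (j u)] at h1
      have : (j w + ε / (-α)) * α = j w * α - ε := by
        have hne : α ≠ 0 := by linarith
        have hmul : ε / (-α) * α = -ε := by rw [div_neg, neg_mul, div_mul_cancel₀ _ hne]
        rw [add_mul, hmul]; ring
      nlinarith
    linarith [le_of_forall_pos_le_add this]
  refine ⟨(-α)⁻¹ • (F.comp (ContinuousLinearMap.inl ℝ E ℝ)), fun w => ?_⟩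
  have hw := key w
  have hαrec : 0 < -α := by linarith
  simp only [ContinuousLinearMap.smul_apply, ContinuousLinearMap.comp_apply,
    ContinuousLinearMap.inl_apply, map_sub, smul_eq_mul]
  have h2 : (-α) * (-α)⁻¹ = 1 := mul_inv_cancel₀ (by linarith)
  have h3 := mul_le_mul_of_nonneg_left hw (le_of_lt (inv_pos.mpr hαrec))
  have h4 : (-α)⁻¹ * α = -1 := by
    have : (-α)⁻¹ * α = -((-α)⁻¹ * (-α)) := by ring
    rw [this, inv_mul_cancel₀ (by linarith : -α ≠ 0)]
  have e1 : (-α)⁻¹ * (F (w, 0) + j w * α) = (-α)⁻¹ * F (w, 0) + j w * ((-α)⁻¹ * α) := by ring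
  have e2 : (-α)⁻¹ * (F (u, 0) + j u * α) = (-α)⁻¹ * F (u, 0) + j u * ((-α)⁻¹ * α) := by ring
  rw [e1, e2, h4] at h3
  linarith

lemma strong_conv {V H : Type*} [NormedAddCommGroup V] [InnerProductSpace ℝ V] [CompleteSpace V]
    [NormedAddCommGroup H] [InnerProductSpace ℝ H] [CompleteSpace H]
    (ι : V →L[ℝ] H) (hιcpt : IsCompactOperator ι)
    (x : ℕ → V) (x₀ : V) (C : ℝ) (hC : ∀ n, ‖x n‖ ≤ C)
    (hweak : ∀ φ : V →L[ℝ] ℝ, Tendsto (fun n => φ (x n)) atTop (𝓝 (φ x₀))) :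
    Tendsto (fun n => ι (x n)) atTop (𝓝 (ι x₀)) := by
  obtain ⟨K, hK, hKsub⟩ := hιcpt.image_subset_compact_of_bounded
    (𝕜₁ := ℝ) (f := (ι : V →ₗ[ℝ] H)) (Metric.isBounded_closedBall (x := (0:V)) (r := C))
  have hmem : ∀ n, ι (x n) ∈ K := fun n =>
    hKsub ⟨x n, by simpa [Metric.mem_closedBall] using hC n, rfl⟩
  have hweakH : ∀ w : H, Tendsto (fun n => (inner ℝ (ι (x n)) w : ℝ)) atTop
      (𝓝 (inner ℝ (ι x₀) w : ℝ)) := by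
    intro w
    have := hweak (((innerSL ℝ w).comp ι))
    simp only [ContinuousLinearMap.comp_apply, innerSL_apply_apply] at this
    simpa [real_inner_comm] using this
  apply tendsto_of_subseq_tendsto
  intro ns hns
  obtain ⟨a, _, ms, hms, hlim⟩ := hK.tendsto_subseq (x := fun n => ι (x (ns n)))
    (fun n => hmem (ns n))
  refine ⟨ms, ?_⟩
  have ha : a = ι x₀ := by
    have hinner : ∀ w : H, (inner ℝ (ι x₀) w : ℝ) = inner ℝ a w := by
      intro w
      have h1 : Tendsto (fun n => (inner ℝ (ι (x (ns (ms n)))) w : ℝ)) atTop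
          (𝓝 (inner ℝ (ι x₀) w : ℝ)) :=
        (hweakH w).comp ((hns.comp hms.tendsto_atTop))
      have h2 : Tendsto (fun n => (inner ℝ (ι (x (ns (ms n)))) w : ℝ)) atTop
          (𝓝 (inner ℝ a w : ℝ)) :=
        ((continuous_inner.comp (Continuous.prodMk continuous_id continuous_const)).tendsto a
          ).comp hlim |>.congr (fun n => rfl)
      exact tendsto_nhds_unique h1 h2
    have : ∀ w : H, (inner ℝ (ι x₀ - a) w : ℝ) = 0 := by
      intro w; rw [inner_sub_left, hinner w]; ring
    have := this (ι x₀ - a)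
    rw [inner_self_eq_zero (𝕜 := ℝ)] at this
    exact (sub_eq_zero.mp this).symm
  rw [← ha]
  exact hlim

/-- Stability of the variational inequality of the second kind under weak convergence of data:
if `fₙ ⇀ f` weakly in `H`, `uₙ ⇀ u` weakly in `V`, `V` is compactly embedded in `H` via `ι`,
`A` is weakly sequentially continuous and `j` is convex continuous, and each `uₙ` solves the VI
with right-hand side `fₙ`, then `u` solves the VI with right-hand side `f`. -/
theorem stmt_5
    {V H : Type*} [NormedAddCommGroup V] [InnerProductSpace ℝ V] [CompleteSpace V]
    [NormedAddCommGroup H] [InnerProductSpace ℝ H] [CompleteSpace H]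
    (ι : V →L[ℝ] H) (hιcpt : IsCompactOperator ι)
    (hιinj : Function.Injective ι) (hιdense : DenseRange ι)
    (A : V →L[ℝ] (V →L[ℝ] ℝ)) (c : ℝ) (hc : 0 < c)
    (hcoer : ∀ v : V, c * ‖v‖ ^ 2 ≤ A v v)
    (hAwsc : ∀ (w : V) (x : ℕ → V) (x₀ : V),
      (∀ φ : V →L[ℝ] ℝ, Tendsto (fun n => φ (x n)) atTop (𝓝 (φ x₀))) →
      Tendsto (fun n => A (x n) w) atTop (𝓝 (A x₀ w)))
    (j : V → ℝ) (hjconv : ConvexOn ℝ Set.univ j) (hjcont : Continuous j)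
    (fseq : ℕ → H) (f : H) (useq : ℕ → V) (u : V)
    (hfweak : ∀ w : H, Tendsto (fun n => (inner ℝ (fseq n) w : ℝ)) atTop (𝓝 (inner ℝ f w : ℝ)))
    (huweak : ∀ φ : V →L[ℝ] ℝ, Tendsto (fun n => φ (useq n)) atTop (𝓝 (φ u)))
    (hVI : ∀ n, ∀ v : V,
      A (useq n) (v - useq n) + j v - j (useq n) ≥ (inner ℝ (fseq n) (ι (v - useq n)) : ℝ)) :
    ∀ v : V, A u (v - u) + j v - j u ≥ (inner ℝ f (ι (v - u)) : ℝ) := by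
  intro v
  -- boundedness of the sequences
  have huw_inner : ∀ w : V, Tendsto (fun n => (inner ℝ (useq n) w : ℝ)) atTop
      (𝓝 (inner ℝ u w : ℝ)) := by
    intro w
    have := huweak (innerSL ℝ w)
    simp only [innerSL_apply_apply] at this
    simpa [real_inner_comm] using this
  obtain ⟨Cu, hCu⟩ := bdd_of_weak useq u huw_inner
  obtain ⟨Cf, hCf⟩ := bdd_of_weak fseq f hfweak
  -- strong convergence of ι (useq n) in H
  have hstrong := strong_conv ι hιcpt useq u Cu hCu huweak
  -- convergence of the pairing
  have hpair : Tendsto (fun n => (inner ℝ (fseq n) (ι (useq n)) : ℝ)) atTop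
      (𝓝 (inner ℝ f (ι u) : ℝ)) := by
    have h1 : Tendsto (fun n => (inner ℝ (fseq n) (ι (useq n) - ι u) : ℝ)) atTop (𝓝 0) := by
      apply squeeze_zero_norm (a := fun n => Cf * ‖ι (useq n) - ι u‖)
      · intro n
        calc ‖(inner ℝ (fseq n) (ι (useq n) - ι u) : ℝ)‖
            ≤ ‖fseq n‖ * ‖ι (useq n) - ι u‖ := norm_inner_le_norm _ _
          _ ≤ Cf * ‖ι (useq n) - ι u‖ :=
              mul_le_mul_of_nonneg_right (hCf n) (norm_nonneg _)
      · have hd : Tendsto (fun n => ι (useq n) - ι u) atTop (𝓝 0) := by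
          simpa using hstrong.sub (tendsto_const_nhds (x := ι u))
        simpa using hd.norm.const_mul Cf
    have h2 := hfweak (ι u)
    have h3 := h1.add h2
    rw [zero_add] at h3
    refine h3.congr (fun n => ?_)
    rw [inner_sub_right]; ring
  -- convergence of the bilinear-form terms
  have hA1 : Tendsto (fun n => A (useq n) v) atTop (𝓝 (A u v)) := hAwsc v useq u huweak
  have hA2 : Tendsto (fun n => A (useq n) u) atTop (𝓝 (A u u)) := hAwsc u useq u huweak
  have hA3 : Tendsto (fun n => A u (useq n)) atTop (𝓝 (A u u)) := huweak (A u)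
  have hfv := hfweak (ι v)
  set t : ℕ → ℝ := fun n => A (useq n) v - A (useq n) u - A u (useq n) + A u u + j v
      - inner ℝ (fseq n) (ι v) + inner ℝ (fseq n) (ι (useq n)) with ht_def
  have ht : Tendsto t atTop
      (𝓝 (A u v - A u u - A u u + A u u + j v - inner ℝ f (ι v) + inner ℝ f (ι u))) := by
    exact (((((hA1.sub hA2).sub hA3).add_const (A u u)).add_const (j v)).sub hfv).add hpair
  -- bound j (useq n) ≤ t n using the VI and coercivity
  have hjb : ∀ n, j (useq n) ≤ t n := by
    intro n
    have h1 := hVI n v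
    have h2 := hcoer (useq n - u)
    have h3 : (0:ℝ) ≤ c * ‖useq n - u‖ ^ 2 := by positivity
    simp only [map_sub, ContinuousLinearMap.sub_apply, inner_sub_right] at h1 h2
    simp only [ht_def]
    linarith
  -- conclude via a subgradient of j at u
  obtain ⟨ψ, hψ⟩ := subgrad j hjconv hjcont u
  have hlower : ∀ n, j u + (ψ (useq n) - ψ u) ≤ t n := by
    intro n
    have := hψ (useq n)
    rw [map_sub] at this
    linarith [hjb n]
  have hlim2 : Tendsto (fun n => j u + (ψ (useq n) - ψ u)) atTop (𝓝 (j u)) := by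
    have h := (huweak ψ).sub_const (ψ u)
    have := (tendsto_const_nhds (x := j u) (f := atTop (α := ℕ))).add h
    simpa using this
  have hfinal : j u ≤ A u v - A u u - A u u + A u u + j v - inner ℝ f (ι v) + inner ℝ f (ι u) :=
    le_of_tendsto_of_tendsto' hlim2 ht hlower
  rw [ge_iff_le, map_sub ι v u, inner_sub_right, map_sub (A u) v u]
  linarith
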